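/- Let G(n) denote the number of partitions of an n-element set all of whose blocks have at most 3 elements (so G(0)=1, G(1)=1, G(2)=2, G(3)=5, G(4)=14, G(5)=46, G(6)=166, …). Then, as formal power series over ℚ, ∑_{n≥0} G(n)·X^n/n! = exp(X + X²/2 + X³/6). -/

import Mathlib

/-- Composition `g ∘ T` of formal power series over `ℚ`, valid (equal to the usual
substitution) when `T` has zero constant term: the `k`-th coefficient is
`∑_{n ≤ k} (coeff n g) · (coeff k (T^n))`. -/
noncomputable def PowerSeries.comp (g T : PowerSeries ℚ) : PowerSeries ℚ :=
  PowerSeries.mk fun k =>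
    ∑ n ∈ Finset.range (k + 1), PowerSeries.coeff n g * PowerSeries.coeff k (T ^ n)


open Finset PowerSeries

noncomputable def pc (α : Type) : ℕ :=
  Nat.card {P : Set (Set α) // Setoid.IsPartition P ∧ ∀ b ∈ P, b.ncard ≤ 3}

lemma isPartition_image {α β : Type} (e : α ≃ β) {P : Set (Set α)}
    (hP : Setoid.IsPartition P) : Setoid.IsPartition ((fun s => e '' s) '' P) := by
  constructor
  · rintro ⟨s, hs, h⟩
    exact hP.1 (by rwa [Set.image_eq_empty.1 h] at hs)
  · intro b
    obtain ⟨s, ⟨hsP, hmem⟩, huniq⟩ := hP.2 (e.symm b)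
    refine ⟨e '' s, ⟨⟨s, hsP, rfl⟩, ⟨e.symm b, hmem, by simp⟩⟩, ?_⟩
    rintro t ⟨⟨s', hs', rfl⟩, hb⟩
    obtain ⟨a, ha, hab⟩ := hb
    have : a = e.symm b := by simp [← hab]
    subst this
    rw [huniq s' ⟨hs', ha⟩]

lemma pc_congr {α β : Type} (e : α ≃ β) : pc α = pc β := by
  refine Nat.card_congr (Equiv.subtypeEquiv (Equiv.Set.congr (Equiv.Set.congr e)) ?_)
  intro P
  have himg : ∀ (γ δ : Type) (f : γ ≃ δ) (Q : Set (Set γ)),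
      (Equiv.Set.congr (Equiv.Set.congr f)) Q = (fun s => f '' s) '' Q := by
    intro γ δ f Q
    rfl
  rw [himg]
  constructor
  · rintro ⟨h1, h2⟩
    refine ⟨isPartition_image e h1, ?_⟩
    rintro b ⟨s, hs, rfl⟩
    rw [Set.ncard_image_of_injective _ e.injective]
    exact h2 s hs
  · rintro ⟨h1, h2⟩
    have key : (fun s => e.symm '' s) '' ((fun s => e '' s) '' P) = P := by
      rw [Set.image_image]
      simp only [Equiv.symm_image_image]
      exact Set.image_id P
    have := isPartition_image e.symm h1
    rw [key] at this
    refine ⟨this, fun b hb => ?_⟩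
    have h3 := h2 (e '' b) ⟨b, hb, rfl⟩
    rwa [Set.ncard_image_of_injective _ e.injective] at h3

lemma pc_of_isEmpty (α : Type) [IsEmpty α] : pc α = 1 := by
  rw [pc, Nat.card_eq_one_iff_unique]
  constructor
  · constructor
    rintro ⟨P, hP, -⟩ ⟨Q, hQ, -⟩
    have hempty : ∀ (R : Set (Set α)), Setoid.IsPartition R → R = ∅ := by
      intro R hR
      ext b
      simp only [Set.mem_empty_iff_false, iff_false]
      intro hb
      rcases Set.eq_empty_or_nonempty b with h | ⟨x, -⟩
      · exact hR.1 (h ▸ hb)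
      · exact IsEmpty.false x
    simp [hempty P hP, hempty Q hQ]
  · refine ⟨⟨∅, ⟨?_, ?_⟩, ?_⟩⟩
    · simp
    · intro a; exact (IsEmpty.false a).elim
    · simp

section Rec
variable {α : Type} [Fintype α] [DecidableEq α]

def KC (s : Finset α) : Set α := (↑s : Set α)ᶜ

def emb (s : Finset α) : ↥(KC s) → Option α := fun x => some x.1

lemma em_inj (s : Finset α) : Function.Injective (emb s) :=
  fun a b h => Subtype.ext (Option.some_injective _ h)

def blk (s : Finset α) : Set (Option α) := insert none (some '' ↑s)

lemma none_not_mem_img {s : Finset α} {q : Set ↥(KC s)} : none ∉ emb s '' q := by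
  rintro ⟨y, -, h⟩
  exact Option.some_ne_none _ h

lemma mem_img_iff {s : Finset α} {q : Set ↥(KC s)} {x : α} (hx : x ∈ KC s) :
    some x ∈ emb s '' q ↔ (⟨x, hx⟩ : ↥(KC s)) ∈ q := by
  constructor
  · rintro ⟨y, hy, h⟩
    have : y = ⟨x, hx⟩ := Subtype.ext (Option.some_injective _ h)
    rwa [this] at hy
  · intro h
    exact ⟨⟨x, hx⟩, h, rfl⟩

lemma blk_ncard (s : Finset α) : (blk s).ncard = 1 + s.card := by
  rw [blk, Set.ncard_insert_of_notMem (by rintro ⟨y, -, h⟩; exact Option.some_ne_none _ h)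
      (Set.toFinite _),
    Set.ncard_image_of_injective _ (Option.some_injective _), Set.ncard_coe_finset, add_comm]

lemma isPartition_insert (s : Finset α) (hs : s.card ≤ 2) (Q : Set (Set ↥(KC s)))
    (hQ : Setoid.IsPartition Q) (hQ3 : ∀ b ∈ Q, b.ncard ≤ 3) :
    Setoid.IsPartition (insert (blk s) ((fun q => emb s '' q) '' Q)) ∧
      ∀ b ∈ insert (blk s) ((fun q => emb s '' q) '' Q), b.ncard ≤ 3 := by
  constructor
  · constructor
    · intro h
      rcases Set.mem_insert_iff.1 h with h2 | ⟨q, hq, h2⟩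
      · have : none ∈ (∅ : Set (Option α)) := h2 ▸ Set.mem_insert _ _
        exact this
      · have : q = ∅ := by
          rcases Set.eq_empty_or_nonempty q with h' | ⟨y, hy⟩
          · exact h'
          · have hmem : emb s y ∈ (fun q => emb s '' q) q := ⟨y, hy, rfl⟩
            rw [h2] at hmem
            exact absurd hmem (Set.notMem_empty _)
        exact hQ.1 (this ▸ hq)
    · intro a
      match a with
      | none =>
        refine ⟨blk s, ⟨Set.mem_insert _ _, Set.mem_insert _ _⟩, ?_⟩
        rintro t ⟨ht, hnt⟩
        rcases Set.mem_insert_iff.1 ht with h | ⟨q, hq, rfl⟩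
        · exact h
        · exact absurd hnt none_not_mem_img
      | some x =>
        by_cases hx : x ∈ s
        · refine ⟨blk s, ⟨Set.mem_insert _ _, Set.mem_insert_of_mem _ ⟨x, hx, rfl⟩⟩, ?_⟩
          rintro t ⟨ht, hxt⟩
          rcases Set.mem_insert_iff.1 ht with h | ⟨q, hq, rfl⟩
          · exact h
          · rcases hxt with ⟨y, -, hy⟩
            have : (y : α) = x := Option.some_injective _ hy
            exact absurd (this ▸ y.2) (by simpa [KC] using hx)
        · have hx' : x ∈ KC s := by simpa [KC] using hx
          obtain ⟨q, ⟨hqQ, hxq⟩, huq⟩ := hQ.2 ⟨x, hx'⟩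
          refine ⟨emb s '' q, ⟨Set.mem_insert_of_mem _ ⟨q, hqQ, rfl⟩,
            ⟨⟨x, hx'⟩, hxq, rfl⟩⟩, ?_⟩
          rintro t ⟨ht, hxt⟩
          rcases Set.mem_insert_iff.1 ht with rfl | ⟨q', hq', rfl⟩
          · rcases Set.mem_insert_iff.1 hxt with h | ⟨y, hy, h⟩
            · exact absurd h (by simp)
            · exact absurd ((Option.some_injective _ h) ▸ hy) hx
          · rw [huq q' ⟨hq', (mem_img_iff hx').1 hxt⟩]
  · intro b hb
    rcases Set.mem_insert_iff.1 hb with rfl | ⟨q, hq, rfl⟩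
    · rw [blk_ncard]; omega
    · rw [Set.ncard_image_of_injective _ (em_inj s)]
      exact hQ3 q hq
end Rec

section Rec2
variable {α : Type} [Fintype α] [DecidableEq α]

noncomputable def Fmap :
    (Σ s : {s : Finset α // s.card ≤ 2},
      {Q : Set (Set ↥(KC s.1)) // Setoid.IsPartition Q ∧ ∀ b ∈ Q, b.ncard ≤ 3}) →
    {P : Set (Set (Option α)) // Setoid.IsPartition P ∧ ∀ b ∈ P, b.ncard ≤ 3} :=
  fun x =>
    ⟨insert (blk x.1.1) ((fun q => emb x.1.1 '' q) '' x.2.1),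
      isPartition_insert x.1.1 x.1.2 x.2.1 x.2.2.1 x.2.2.2⟩

lemma blk_inj {s t : Finset α} (h : blk s = blk t) : s = t := by
  have : ∀ x : α, x ∈ s ↔ x ∈ t := by
    intro x
    have := Set.ext_iff.1 h (some x)
    simpa [blk] using this
  exact Finset.ext this

lemma Fmap_injective : Function.Injective (Fmap (α := α)) := by
  rintro ⟨⟨s, hs⟩, ⟨Q, hQ⟩⟩ ⟨⟨t, ht⟩, ⟨Q', hQ'⟩⟩ h
  have h' : insert (blk s) ((fun q => emb s '' q) '' Q)
      = insert (blk t) ((fun q => emb t '' q) '' Q') := congrArg Subtype.val h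
  -- first, s = t
  have hblk : blk s = blk t := by
    have h1 : blk s ∈ insert (blk t) ((fun q => emb t '' q) '' Q') := by
      rw [← h']; exact Set.mem_insert _ _
    rcases Set.mem_insert_iff.1 h1 with h1 | ⟨q, hq, h1⟩
    · exact h1
    · have hn : none ∈ (fun q => emb t '' q) q := by
        rw [h1]; exact Set.mem_insert _ _
      exact absurd hn none_not_mem_img
  have hst : s = t := blk_inj hblk
  subst hst
  have hnotmem : ∀ (Q : Set (Set ↥(KC s))), blk s ∉ (fun q => emb s '' q) '' Q := by
    rintro Q ⟨q, -, hq⟩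
    have hn : none ∈ (fun q => emb s '' q) q := by
      rw [hq]; exact Set.mem_insert _ _
    exact none_not_mem_img hn
  have himg : (fun q => emb s '' q) '' Q = (fun q => emb s '' q) '' Q' := by
    have := h'
    rw [Set.insert_eq, Set.insert_eq] at this
    have h2 : ∀ (A B : Set (Set (Option α))), {blk s} ∪ A = {blk s} ∪ B → blk s ∉ A → blk s ∉ B → A = B := by
      intro A B hAB hA hB
      ext b
      constructor
      · intro hbA
        have : b ∈ {blk s} ∪ B := hAB ▸ Set.mem_union_right _ hbA
        rcases this with h | h
        · exact absurd (Set.mem_singleton_iff.1 h ▸ hbA) hA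
        · exact h
      · intro hbB
        have : b ∈ {blk s} ∪ A := hAB ▸ Set.mem_union_right _ hbB
        rcases this with h | h
        · exact absurd (Set.mem_singleton_iff.1 h ▸ hbB) hB
        · exact h
    exact h2 _ _ this (hnotmem Q) (hnotmem Q')
  have hQeq : Q = Q' :=
    Set.image_injective.2 (Set.image_injective.2 (em_inj s)) himg
  subst hQeq
  rfl
end Rec2

section Rec3
variable {α : Type} [Fintype α] [DecidableEq α]

lemma Fmap_surjective : Function.Surjective (Fmap (α := α)) := by
  rintro ⟨P, hP, h3⟩
  obtain ⟨b0, ⟨hb0P, hb0n⟩, hu⟩ := hP.2 none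
  have hBfin : Set.Finite {x : α | some x ∈ b0} := Set.toFinite _
  set s : Finset α := hBfin.toFinset with hsdef
  have hmem_s : ∀ x : α, x ∈ s ↔ some x ∈ b0 := fun x => by
    simp [hsdef, Set.Finite.mem_toFinset]
  have hb0eq : b0 = blk s := by
    ext a
    cases a with
    | none => simp [blk, hb0n]
    | some x => simp [blk, hmem_s]
  have hcard : s.card ≤ 2 := by
    have h1 := h3 b0 hb0P
    rw [hb0eq, blk_ncard] at h1
    omega
  have hblocks : ∀ b ∈ P, b ≠ b0 → b ⊆ Set.range (emb s) := by
    intro b hbP hbne a hab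
    match a with
    | none => exact absurd (hu b ⟨hbP, hab⟩) hbne
    | some x =>
      by_cases hx : x ∈ s
      · have hxb0 : some x ∈ b0 := (hmem_s x).1 hx
        obtain ⟨c, -, hc⟩ := hP.2 (some x)
        exact absurd ((hc b ⟨hbP, hab⟩).trans (hc b0 ⟨hb0P, hxb0⟩).symm) hbne
      · exact ⟨⟨x, by simp [KC, hx]⟩, rfl⟩
  set Q : Set (Set ↥(KC s)) := (fun b => emb s ⁻¹' b) '' (P \ {b0}) with hQdef
  have himg : ∀ b ∈ P \ {b0}, emb s '' (emb s ⁻¹' b) = b := fun b hb =>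
    Set.image_preimage_eq_of_subset (hblocks b hb.1 hb.2)
  have hQP : (fun q => emb s '' q) '' Q = P \ {b0} := by
    rw [hQdef, Set.image_image]
    calc (fun b => emb s '' (emb s ⁻¹' b)) '' (P \ {b0})
        = (fun b => b) '' (P \ {b0}) := Set.image_congr himg
      _ = P \ {b0} := Set.image_id _
  have hQpart : Setoid.IsPartition Q := by
    constructor
    · rintro ⟨b, hb, hbe⟩
      have h5 : emb s ⁻¹' b = ∅ := hbe
      have : b = ∅ := by
        rw [← himg b hb, h5, Set.image_empty]
      exact hP.1 (this ▸ hb.1)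
    · rintro ⟨x, hx⟩
      have hxs : x ∉ s := by simpa [KC] using hx
      obtain ⟨b, ⟨hbP, hxb⟩, hub⟩ := hP.2 (some x)
      have hbne : b ≠ b0 := by
        intro h
        exact hxs ((hmem_s x).2 (h ▸ hxb))
      refine ⟨emb s ⁻¹' b, ⟨⟨b, ⟨hbP, hbne⟩, rfl⟩, hxb⟩, ?_⟩
      rintro q ⟨⟨b', hb', rfl⟩, hxq⟩
      have : b' = b := hub b' ⟨hb'.1, hxq⟩
      rw [this]
  have hQ3 : ∀ q ∈ Q, q.ncard ≤ 3 := by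
    rintro q ⟨b, hb, rfl⟩
    have : (emb s '' (emb s ⁻¹' b)).ncard = (emb s ⁻¹' b).ncard :=
      Set.ncard_image_of_injective _ (em_inj s)
    rw [himg b hb] at this
    rw [← this]
    exact h3 b hb.1
  refine ⟨⟨⟨s, hcard⟩, ⟨Q, hQpart, hQ3⟩⟩, ?_⟩
  apply Subtype.ext
  show insert (blk s) ((fun q => emb s '' q) '' Q) = P
  rw [hQP, ← hb0eq, Set.insert_diff_singleton, Set.insert_eq_self.2 hb0P]

end Rec3

lemma nat_card_sigma {ι : Type} [Fintype ι] (f : ι → Type) [∀ i, Finite (f i)] :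
    Nat.card (Σ i, f i) = ∑ i, Nat.card (f i) := by
  classical
  letI : ∀ i, Fintype (f i) := fun i => Fintype.ofFinite _
  simp [Nat.card_eq_fintype_card, Fintype.card_sigma]

section Rec4
variable {α : Type} [Fintype α] [DecidableEq α]

lemma pc_option : pc (Option α) =
    ∑ s ∈ univ.powerset.filter (fun s : Finset α => s.card ≤ 2), pc ↥(KC s) := by
  classical
  have h1 : pc (Option α) = Nat.card (Σ s : {s : Finset α // s.card ≤ 2},
      {Q : Set (Set ↥(KC s.1)) // Setoid.IsPartition Q ∧ ∀ b ∈ Q, b.ncard ≤ 3}) :=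
    (Nat.card_congr (Equiv.ofBijective _ ⟨Fmap_injective, Fmap_surjective⟩)).symm
  have h2 : ∑ s ∈ univ.powerset.filter (fun s : Finset α => s.card ≤ 2), pc ↥(KC s)
      = ∑ s : {s : Finset α // s.card ≤ 2}, pc ↥(KC s.1) :=
    Finset.sum_subtype _ (fun s => by simp) _
  rw [h1, nat_card_sigma, h2]
  rfl

lemma pc_KC (s : Finset α) : pc ↥(KC s) = pc (Fin (Fintype.card α - s.card)) := by
  refine pc_congr (Finite.equivFinOfCardEq ?_)
  rw [Nat.card_coe_set_eq]
  have h1 := Set.ncard_add_ncard_compl (↑s : Set α)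
  rw [Set.ncard_coe_finset, Nat.card_eq_fintype_card] at h1
  rw [show KC s = (↑s : Set α)ᶜ from rfl]
  have h2 : s.card ≤ Fintype.card α := Finset.card_le_univ s
  omega

end Rec4

lemma pc_fin_rec (n : ℕ) :
    pc (Fin (n+1)) = pc (Fin n) + n.choose 1 * pc (Fin (n-1)) + n.choose 2 * pc (Fin (n-2)) := by
  classical
  have h0 : pc (Fin (n+1)) = pc (Option (Fin n)) := pc_congr (finSuccEquiv n)
  rw [h0, pc_option]
  have hsplit : (univ.powerset.filter (fun s : Finset (Fin n) => s.card ≤ 2))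
      = (range 3).biUnion (fun k => (univ : Finset (Fin n)).powersetCard k) := by
    ext s
    simp only [mem_filter, mem_powerset, mem_biUnion, mem_range, Finset.mem_powersetCard_univ]
    constructor
    · rintro ⟨-, h⟩; exact ⟨s.card, by omega, rfl⟩
    · rintro ⟨k, hk, rfl⟩; exact ⟨subset_univ s, by omega⟩
  rw [hsplit, Finset.sum_biUnion]
  · have hterm : ∀ k, ∑ s ∈ (univ : Finset (Fin n)).powersetCard k, pc ↥(KC s)
        = n.choose k * pc (Fin (n - k)) := by
      intro k
      have : ∀ s ∈ (univ : Finset (Fin n)).powersetCard k, pc ↥(KC s) = pc (Fin (n - k)) := by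
        intro s hs
        rw [pc_KC, Fintype.card_fin, Finset.mem_powersetCard_univ.1 hs]
      rw [Finset.sum_congr rfl this, Finset.sum_const, smul_eq_mul,
        Finset.card_powersetCard, card_univ, Fintype.card_fin]
    rw [show range 3 = {0, 1, 2} by rfl]
    rw [Finset.sum_insert (by simp), Finset.sum_insert (by simp), Finset.sum_singleton]
    rw [hterm 0, hterm 1, hterm 2]
    simp only [Nat.choose_zero_right, Nat.choose_one_right, one_mul, Nat.sub_zero]
    omega
  · intro i hi j hj hij
    simp only [Function.onFun]
    rw [Finset.disjoint_left]
    intro s hsi hsj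
    rw [Finset.mem_powersetCard_univ] at hsi hsj
    exact hij (hsi ▸ hsj ▸ rfl)

noncomputable def T : PowerSeries ℚ :=
  PowerSeries.X + PowerSeries.C (1 / 2) * PowerSeries.X ^ 2 +
    PowerSeries.C (1 / 6) * PowerSeries.X ^ 3

lemma hT0 : constantCoeff T = 0 := by
  simp [T, ← coeff_zero_eq_constantCoeff, coeff_X_pow]

lemma coeff_T_pow_eq_zero {k n : ℕ} (h : k < n) : coeff k (T ^ n) = 0 := by
  have hx : (X : ℚ⟦X⟧) ^ n ∣ T ^ n := pow_dvd_pow_of_dvd (X_dvd_iff.2 hT0) n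
  exact (X_pow_dvd_iff.1 hx) k h

lemma hDT : (d⁄dX ℚ) T = 1 + X + C (1/2) * X ^ 2 := by
  ext n
  rw [coeff_derivative]
  rcases n with _ | _ | _ | n <;>
    simp [T, coeff_one, coeff_X, coeff_X_pow] <;> norm_num

lemma coeff_mul_DT (f : ℚ⟦X⟧) (k : ℕ) :
    coeff k (f * (d⁄dX ℚ) T) =
      coeff k f + (if 1 ≤ k then coeff (k-1) f else 0)
        + (if 2 ≤ k then (1/2) * coeff (k-2) f else 0) := by
  rw [hDT, mul_add, mul_add, mul_one, map_add, map_add]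
  rw [show f * (C (1/2) * X ^ 2) = C (1/2) * (f * X ^ 2) by ring]
  rw [coeff_C_mul, coeff_mul_X_pow', show (X : ℚ⟦X⟧) = X ^ 1 by ring, coeff_mul_X_pow']
  split_ifs <;> simp

noncomputable def R (k : ℕ) : ℚ :=
  ∑ n ∈ range (k + 1), ((n.factorial : ℚ))⁻¹ * coeff k (T ^ n)

lemma R_zero : R 0 = 1 := by
  simp [R]

lemma sum_trunc {j k : ℕ} (h : j ≤ k) :
    ∑ m ∈ range (k + 1), ((m.factorial : ℚ))⁻¹ * coeff j (T ^ m) = R j := by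
  rw [R]
  refine (Finset.sum_subset (by intro x hx; simp at hx ⊢; omega) ?_).symm
  intro m hm hm'
  simp only [mem_range] at hm hm'
  rw [coeff_T_pow_eq_zero (by omega), mul_zero]

lemma R_rec (k : ℕ) :
    (k + 1 : ℚ) * R (k + 1) =
      R k + (if 1 ≤ k then R (k-1) else 0) + (if 2 ≤ k then (1/2) * R (k-2) else 0) := by
  have hD : ∀ n : ℕ, coeff (k+1) (T ^ n) * (k+1) = n * coeff k (T ^ (n-1) * (d⁄dX ℚ) T) := by
    intro n
    rw [← coeff_derivative, Derivation.leibniz_pow]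
    rw [smul_eq_mul, nsmul_eq_mul, (map_natCast (C (R := ℚ)) n).symm,
      coeff_C_mul]
  have step : (k + 1 : ℚ) * R (k + 1)
      = ∑ m ∈ range (k + 1), ((m.factorial : ℚ))⁻¹ * coeff k (T ^ m * (d⁄dX ℚ) T) := by
    rw [R, Finset.mul_sum]
    rw [Finset.sum_range_succ' (fun n => (k+1 : ℚ) * (((n.factorial : ℚ))⁻¹ * coeff (k+1) (T ^ n)))]
    simp only [pow_zero, coeff_one, Nat.factorial_zero]
    rw [if_neg (by omega)]
    simp only [mul_zero, add_zero]
    refine Finset.sum_congr rfl fun m _ => ?_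
    have := hD (m + 1)
    push_cast at this ⊢
    rw [mul_comm ((k:ℚ)+1), mul_assoc, mul_comm (coeff (k+1) (T ^ (m+1))) ((k:ℚ)+1),
      show ((k:ℚ)+1) * coeff (k+1) (T ^ (m+1)) = coeff (k+1) (T ^ (m+1)) * ((k:ℚ)+1) by ring,
      this, Nat.factorial_succ]
    have hm0 : ((m.factorial : ℚ)) ≠ 0 := Nat.cast_ne_zero.2 m.factorial_ne_zero
    field_simp
    push_cast
    ring
  rw [step]
  simp only [coeff_mul_DT, mul_add, Finset.sum_add_distrib]
  congr 1
  · congr 1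
    by_cases h1 : 1 ≤ k
    · rw [if_pos h1]
      rw [← sum_trunc (show k - 1 ≤ k by omega)]
      exact Finset.sum_congr rfl fun m _ => by rw [if_pos h1]
    · rw [if_neg h1]
      refine Finset.sum_eq_zero fun m _ => ?_
      rw [if_neg h1, mul_zero]
  · by_cases h2 : 2 ≤ k
    · rw [if_pos h2, ← sum_trunc (show k - 2 ≤ k by omega), Finset.mul_sum]
      exact Finset.sum_congr rfl fun m _ => by rw [if_pos h2]; ring
    · rw [if_neg h2]
      refine Finset.sum_eq_zero fun m _ => ?_
      rw [if_neg h2, mul_zero]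


lemma key_eq (G : ℕ → ℕ) (hGpc : ∀ n, G n = pc (Fin n)) :
    ∀ k : ℕ, (G k : ℚ) / (k.factorial : ℚ) = R k := by
  have hG0 : G 0 = 1 := by rw [hGpc]; exact pc_of_isEmpty (Fin 0)
  intro k
  induction k using Nat.strong_induction_on with
  | _ k ih =>
    match k with
    | 0 => simp [hG0, R_zero]
    | Nat.succ k =>
      have hrec := R_rec k
      have hGrec : G (k+1) = G k + k.choose 1 * G (k-1) + k.choose 2 * G (k-2) := by
        rw [hGpc, hGpc, hGpc, hGpc]; exact pc_fin_rec k
      have e0 : (G k : ℚ) / (k.factorial : ℚ) = R k := ih k (by omega)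
      have e1 : (G (k-1) : ℚ) / ((k-1).factorial : ℚ) = R (k-1) := ih (k-1) (by omega)
      have e2 : (G (k-2) : ℚ) / ((k-2).factorial : ℚ) = R (k-2) := ih (k-2) (by omega)
      rcases k with _ | _ | m
      · norm_num at hrec hGrec ⊢
        rw [hGrec, hG0] at *
        rw [hrec, R_zero]
        norm_num
      · norm_num at hrec hGrec e0 e1 ⊢
        have hR2 : R 2 = (R 1 + R 0) / 2 := by
          rw [eq_div_iff (by norm_num : (2:ℚ) ≠ 0), mul_comm]
          linarith [hrec]
        rw [hGrec, hR2, ← e0, ← e1]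
        push_cast
        norm_num
      · have h1le : 1 ≤ m + 2 := by omega
        have h2le : 2 ≤ m + 2 := by omega
        rw [if_pos h1le, if_pos h2le] at hrec
        have hs1 : m + 2 - 1 = m + 1 := by omega
        have hs2 : m + 2 - 2 = m := by omega
        rw [hs1] at hrec e1
        rw [hs2] at hrec e2
        have hch1 : ((m+2).choose 1 : ℚ) = (m : ℚ) + 2 := by
          rw [Nat.choose_one_right]; push_cast; ring
        have hch2 : ((m+2).choose 2 : ℚ) = ((m : ℚ) + 2) * ((m : ℚ) + 1) / 2 := by
          rw [Nat.cast_choose_two]; push_cast; ring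
        have hGq : (G (m+3) : ℚ) = (G (m+2) : ℚ) + ((m : ℚ) + 2) * (G (m+1) : ℚ)
            + ((m : ℚ) + 2) * ((m : ℚ) + 1) / 2 * (G m : ℚ) := by
          have := congrArg (fun x : ℕ => (x : ℚ)) hGrec
          push_cast at this
          rw [this, hch1, hch2]
        have hf3 : ((m+3).factorial : ℚ)
            = ((m:ℚ)+3) * (((m:ℚ)+2) * (((m:ℚ)+1) * (m.factorial : ℚ))) := by
          rw [show m + 3 = (m+2)+1 by omega, Nat.factorial_succ,
            show m + 2 = (m+1)+1 by omega, Nat.factorial_succ, Nat.factorial_succ]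
          push_cast
          ring
        have hf2 : ((m+2).factorial : ℚ) = ((m:ℚ)+2) * (((m:ℚ)+1) * (m.factorial : ℚ)) := by
          rw [show m + 2 = (m+1)+1 by omega, Nat.factorial_succ, Nat.factorial_succ]
          push_cast
          ring
        have hf1 : ((m+1).factorial : ℚ) = ((m:ℚ)+1) * (m.factorial : ℚ) := by
          rw [Nat.factorial_succ]; push_cast; ring
        have hm0 : (m.factorial : ℚ) ≠ 0 := Nat.cast_ne_zero.2 m.factorial_ne_zero
        have hrec' : ((m:ℚ)+3) * R (m+3) = R (m+2) + R (m+1) + 1/2 * R m := by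
          push_cast at hrec
          convert hrec using 2 <;> push_cast <;> ring
        rw [← e0, ← e1, ← e2] at hrec'
        show (G (m+3) : ℚ) / ((m+3).factorial : ℚ) = R (m+3)
        have h3ne : ((m:ℚ)+3) ≠ 0 := by positivity
        have hm1 : ((m:ℚ)+1) ≠ 0 := by positivity
        have hm2 : ((m:ℚ)+2) ≠ 0 := by positivity
        have hR3 : R (m+3) = ((G (m+2) : ℚ) / ((m+2).factorial : ℚ)
            + (G (m+1) : ℚ) / ((m+1).factorial : ℚ)
            + 1/2 * ((G m : ℚ) / (m.factorial : ℚ))) / ((m:ℚ)+3) := by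
          rw [eq_div_iff h3ne, mul_comm]
          exact hrec'
        rw [hGq, hf3, hR3, hf2, hf1]
        field_simp

/-- The exponential generating function of the numbers of partitions of an `n`-element set
into blocks of size at most 3 is `exp(X + X²/2 + X³/6)`. -/
theorem stmt10 (G : ℕ → ℕ)
    (hG : ∀ n : ℕ, G n = Nat.card
      {P : Set (Set (Fin n)) // Setoid.IsPartition P ∧ ∀ b ∈ P, b.ncard ≤ 3}) :
    (PowerSeries.mk fun n => (G n : ℚ) / (n.factorial : ℚ)) =
      PowerSeries.comp (PowerSeries.exp ℚ)
        (PowerSeries.X + PowerSeries.C (1 / 2) * PowerSeries.X ^ 2 +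
          PowerSeries.C (1 / 6) * PowerSeries.X ^ 3) := by
  have key := key_eq G (fun n => hG n)
  ext k
  rw [PowerSeries.coeff_mk, key]
  rw [show (PowerSeries.X + PowerSeries.C (1 / 2) * PowerSeries.X ^ 2 +
      PowerSeries.C (1 / 6) * PowerSeries.X ^ 3) = T from rfl]
  rw [PowerSeries.comp, PowerSeries.coeff_mk, R]
  refine Finset.sum_congr rfl fun n _ => ?_
  rw [PowerSeries.coeff_exp]
  norm_num
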